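/- Suppose the subspaces have finite overlap with constant Λ > 0, i.e., ‖Σᵢ wᵢ‖² ≤ Λ²·Σᵢ ‖wᵢ‖² for every choice of vectors wᵢ ∈ Wᵢ. Then for every u ∈ V one has ‖Σᵢ Pᵢ u‖ ≤ Λ²·‖u‖ and Σᵢ ‖Pᵢ u‖² ≤ Λ²·‖u‖². -/

import Mathlib

open RealInnerProductSpace

/-- Let `V` be a finite-dimensional real inner product space, `(Wᵢ)` a finite family of
subspaces with orthogonal projections `Pᵢ`, with finite overlap constant `Λ > 0`, i.e.
`‖Σᵢ wᵢ‖² ≤ Λ²·Σᵢ ‖wᵢ‖²` whenever `wᵢ ∈ Wᵢ`.  Then for every `u ∈ V` one has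
`‖Σᵢ Pᵢ u‖ ≤ Λ²·‖u‖` and `Σᵢ ‖Pᵢ u‖² ≤ Λ²·‖u‖²`. -/
theorem stmt_14 {V : Type*} [NormedAddCommGroup V] [InnerProductSpace ℝ V]
    [FiniteDimensional ℝ V]
    {ι : Type*} [Fintype ι] (W : ι → Submodule ℝ V)
    (Λ : ℝ) (hΛ : 0 < Λ)
    (hoverlap : ∀ w : ι → V, (∀ i, w i ∈ W i) →
      ‖∑ i, w i‖ ^ 2 ≤ Λ ^ 2 * ∑ i, ‖w i‖ ^ 2) :
    ∀ u : V, ‖∑ i, ((Submodule.orthogonalProjection (W i) u : V))‖ ≤ Λ ^ 2 * ‖u‖ ∧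
      ∑ i, ‖(Submodule.orthogonalProjection (W i) u : V)‖ ^ 2 ≤ Λ ^ 2 * ‖u‖ ^ 2 := by
  intro u
  set S : V := ∑ i, ((Submodule.orthogonalProjection (W i) u : V)) with hS
  -- Σ ‖Pᵢ u‖² = ⟪S, u⟫
  have hkey : ∑ i, ‖(Submodule.orthogonalProjection (W i) u : V)‖ ^ 2 = ⟪S, u⟫ := by
    rw [hS, sum_inner]
    refine Finset.sum_congr rfl fun i _ => ?_
    have hz := Submodule.starProjection_inner_eq_zero u
      ((Submodule.orthogonalProjection (W i) u : V)) (Submodule.coe_mem _)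
    rw [inner_sub_left, sub_eq_zero, Submodule.starProjection_apply] at hz
    rw [real_inner_comm, hz, real_inner_self_eq_norm_sq]
  have hsum : ‖S‖ ^ 2 ≤ Λ ^ 2 * ∑ i, ‖(Submodule.orthogonalProjection (W i) u : V)‖ ^ 2 :=
    hoverlap _ (fun i => Submodule.coe_mem _)
  have hcs : ⟪S, u⟫ ≤ ‖S‖ * ‖u‖ := real_inner_le_norm S u
  have h1 : ‖S‖ ≤ Λ ^ 2 * ‖u‖ := by
    rcases eq_or_ne ‖S‖ 0 with h0 | h0
    · rw [h0]; positivity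
    · have hSpos : 0 < ‖S‖ := lt_of_le_of_ne (norm_nonneg S) (Ne.symm h0)
      have : ‖S‖ ^ 2 ≤ Λ ^ 2 * (‖S‖ * ‖u‖) := by
        calc ‖S‖ ^ 2 ≤ Λ ^ 2 * ⟪S, u⟫ := by rw [← hkey]; exact hsum
        _ ≤ Λ ^ 2 * (‖S‖ * ‖u‖) := by nlinarith
      nlinarith
  refine ⟨h1, ?_⟩
  calc ∑ i, ‖(Submodule.orthogonalProjection (W i) u : V)‖ ^ 2 = ⟪S, u⟫ := hkey
    _ ≤ ‖S‖ * ‖u‖ := hcs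
    _ ≤ (Λ ^ 2 * ‖u‖) * ‖u‖ := by nlinarith [norm_nonneg u]
    _ = Λ ^ 2 * ‖u‖ ^ 2 := by ring
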